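/- Let A be a (possibly unbounded) operator on a Hilbert space H whose numerical range lies in the closed sector Σ(w₀) = {z ∈ ℂ* : |arg z| ≤ w₀}, and let B be a bounded invertible operator with (B⁻¹u,u) ∈ Σ(w₁) for all u ≠ 0, where Re (B⁻¹u,u) ≥ δ‖u‖², δ > 0. Then for every u ∈ D(A) with u ≠ 0 and every λ ∉ Σ(w₀+w₁) one has ‖(λI − BA)u‖ ≥ (δ/‖B⁻¹‖) · dist(λ, Σ(w₀+w₁)) · ‖u‖. -/

import Mathlib

open Real

noncomputable section

/-- The closed sector `Σ(w) = {z ∈ ℂ* : |arg z| ≤ w}`. -/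
def Sector (w : ℝ) : Set ℂ := {z : ℂ | z ≠ 0 ∧ |z.arg| ≤ w}

/-- Let `A` be an operator on a Hilbert space `H` with numerical range in
`Σ(w₀)`, and `B` a bounded invertible operator with numerical range of `B⁻¹` in `Σ(w₁)`
and `Re (B⁻¹u,u) ≥ δ‖u‖²`, `δ > 0`.  Then for every `u ∈ D(A)`, `u ≠ 0`, and every
`λ ∉ Σ(w₀+w₁)`:  `‖(λI − BA)u‖ ≥ (δ/‖B⁻¹‖) · dist(λ, Σ(w₀+w₁)) · ‖u‖`. -/
theorem sector_lower_estimate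
    {H : Type*} [NormedAddCommGroup H] [InnerProductSpace ℂ H] [CompleteSpace H]
    (D : Submodule ℂ H) (A : D →ₗ[ℂ] H)
    (w0 w1 δ : ℝ)
    (hw0 : 0 ≤ w0) (hw0' : w0 < π / 2) (hw1 : 0 ≤ w1) (hw1' : w1 < π / 2)
    (hδ : 0 < δ)
    (hA : ∀ u : D, (u : H) ≠ 0 → (inner ℂ (u : H) (A u) : ℂ) ∈ Sector w0)
    (B Binv : H →L[ℂ] H)
    (hB1 : B.comp Binv = ContinuousLinearMap.id ℂ H)
    (hB2 : Binv.comp B = ContinuousLinearMap.id ℂ H)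
    (hBcoer : ∀ u : H, δ * ‖u‖ ^ 2 ≤ ((inner ℂ u (Binv u) : ℂ)).re)
    (hBrange : ∀ u : H, u ≠ 0 → (inner ℂ u (Binv u) : ℂ) ∈ Sector w1) :
    ∀ u : D, (u : H) ≠ 0 → ∀ lam : ℂ, lam ∉ closure (Sector (w0 + w1)) →
      δ / ‖Binv‖ * Metric.infDist lam (Sector (w0 + w1)) * ‖(u : H)‖ ≤
        ‖lam • (u : H) - B (A u)‖ := by
  intro u hu lam _
  set α : ℂ := inner ℂ (u : H) (A u) with hα
  set β : ℂ := inner ℂ (u : H) (Binv (u : H)) with hβ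
  set v : H := lam • (u : H) - B (A u) with hv
  have hαS : α ∈ Sector w0 := hA u hu
  have hβS : β ∈ Sector w1 := hBrange (u : H) hu
  have hα0 : α ≠ 0 := hαS.1
  have hβ0 : β ≠ 0 := hβS.1
  have hupos : 0 < ‖(u : H)‖ := norm_pos_iff.mpr hu
  have hβre : δ * ‖(u : H)‖ ^ 2 ≤ β.re := hBcoer (u : H)
  -- key identity
  have hkey : (inner ℂ (u : H) (Binv v) : ℂ) = lam * β - α := by
    have hBB : Binv (B (A u)) = A u := by
      have := congrArg (fun T : H →L[ℂ] H => T (A u)) hB2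
      simpa using this
    simp [hv, map_sub, inner_sub_right, inner_smul_right, hBB, hα, hβ]
  -- α/β lies in the big sector
  have hquot : α / β ∈ Sector (w0 + w1) := by
    have hβarg : |β.arg| ≤ w1 := hβS.2
    have hαarg : |α.arg| ≤ w0 := hαS.2
    have hβarg_ne : β.arg ≠ π := by
      intro h
      have : π ≤ w1 := by rw [← h]; exact le_trans (le_abs_self _) hβarg
      nlinarith [Real.pi_pos]
    have hinvarg : (β⁻¹).arg = -β.arg := by
      rw [Complex.arg_inv]; simp [hβarg_ne]
    have hargadd : (α * β⁻¹).arg = α.arg + (β⁻¹).arg := by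
      apply Complex.arg_mul hα0 (inv_ne_zero hβ0)
      rw [hinvarg]
      constructor
      · nlinarith [abs_le.mp hαarg, abs_le.mp hβarg, Real.pi_pos]
      · nlinarith [abs_le.mp hαarg, abs_le.mp hβarg, Real.pi_pos]
    refine ⟨div_ne_zero hα0 hβ0, ?_⟩
    rw [div_eq_mul_inv, hargadd, hinvarg]
    calc |α.arg + -β.arg| ≤ |α.arg| + |β.arg| := by
          simpa [abs_neg] using abs_add_le α.arg (-β.arg)
      _ ≤ w0 + w1 := add_le_add hαarg hβarg
  -- distance estimate
  have hdist : Metric.infDist lam (Sector (w0 + w1)) ≤ ‖lam - α / β‖ := by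
    simpa [Complex.dist_eq] using Metric.infDist_le_dist_of_mem hquot
  have hdist0 : 0 ≤ Metric.infDist lam (Sector (w0 + w1)) := Metric.infDist_nonneg
  -- |β| ≥ δ‖u‖²
  have hβabs : δ * ‖(u : H)‖ ^ 2 ≤ ‖β‖ :=
    le_trans hβre (Complex.re_le_norm β)
  -- |λβ − α| = |β| |λ − α/β|
  have hfactor : ‖lam * β - α‖ = ‖β‖ * ‖lam - α / β‖ := by
    rw [← norm_mul]
    congr 1
    field_simp
  -- Cauchy–Schwarz chain
  have hCS : ‖lam * β - α‖ ≤ ‖(u : H)‖ * (‖Binv‖ * ‖v‖) := by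
    rw [← hkey]
    calc ‖(inner ℂ (u : H) (Binv v) : ℂ)‖ ≤ ‖(u : H)‖ * ‖Binv v‖ := by
          simpa using norm_inner_le_norm (𝕜 := ℂ) (u : H) (Binv v)
      _ ≤ ‖(u : H)‖ * (‖Binv‖ * ‖v‖) := by
          gcongr
          exact Binv.le_opNorm v
  have hBinvpos : 0 < ‖Binv‖ := by
    rcases eq_or_lt_of_le (norm_nonneg Binv) with h | h
    · exfalso
      have h1 : β.re ≤ ‖β‖ := Complex.re_le_norm β
      have h2 : ‖β‖ ≤ ‖(u : H)‖ * (‖Binv‖ * ‖(u : H)‖) := by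
        calc ‖β‖ ≤ ‖(u : H)‖ * ‖Binv (u : H)‖ := by
              simpa using norm_inner_le_norm (𝕜 := ℂ) (u : H) (Binv (u : H))
          _ ≤ ‖(u : H)‖ * (‖Binv‖ * ‖(u : H)‖) := by
              gcongr; exact Binv.le_opNorm _
      rw [← h] at h2
      simp at h2
      exact hβ0 h2
    · exact h
  -- combine
  have hchain : δ * ‖(u : H)‖ ^ 2 * Metric.infDist lam (Sector (w0 + w1)) ≤
      ‖(u : H)‖ * (‖Binv‖ * ‖v‖) := by
    calc δ * ‖(u : H)‖ ^ 2 * Metric.infDist lam (Sector (w0 + w1))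
        ≤ ‖β‖ * ‖lam - α / β‖ := by
          apply mul_le_mul hβabs hdist hdist0 (norm_nonneg β)
      _ = ‖lam * β - α‖ := hfactor.symm
      _ ≤ ‖(u : H)‖ * (‖Binv‖ * ‖v‖) := hCS
  rw [div_mul_eq_mul_div, div_mul_eq_mul_div, div_le_iff₀ hBinvpos]
  nlinarith [hchain, hupos, norm_nonneg v]
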